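/- Let n, k, j, i be integers with n > k > 0, 0 ≤ j < n and i > 1, and let f*_{(n,k)∖(j),i}(q) denote the distribution of the major index over standard Young tableaux of skew shape (n,k)∖(j) with exactly i descents in which the entry 1 lies in the first (top) row. Then f*_{(n,k)∖(j),i}(q) = f*_{(n−1,k)∖(j),i}(q) + Σ_{ℓ=1}^{k−1} q^{n−j+k−ℓ}·f*_{(n−1,k−ℓ)∖(j),i−1}(q). -/

import Mathlib

open Polynomial
open scoped Classical

noncomputable section

/-- The set of cells of the skew shape `outer \ inner`, where `outer` and `inner` are
lists of row lengths (rows and columns are 0-indexed): the cell `(r, c)` is present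
iff `inner.getD r 0 ≤ c < outer.getD r 0`. -/
def skewCells (outer inner : List ℕ) : Finset (ℕ × ℕ) :=
  ((Finset.range outer.length) ×ˢ (Finset.range (outer.foldr max 0))).filter
    (fun p => inner.getD p.1 0 ≤ p.2 ∧ p.2 < outer.getD p.1 0)

/-- `pos` encodes a standard Young tableau of skew shape `outer \ inner`:
`pos k` is the cell containing the entry `k + 1`.  The conditions say that the
entries are a bijective filling which increases left to right along rows and
top to bottom down columns. -/
def IsSYT (outer inner : List ℕ)
    (pos : Fin (skewCells outer inner).card → ↥(skewCells outer inner)) : Prop :=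
  Function.Injective pos ∧
  (∀ a b, ((pos a : ℕ × ℕ)).1 = ((pos b : ℕ × ℕ)).1 →
      ((pos a : ℕ × ℕ)).2 < ((pos b : ℕ × ℕ)).2 → a < b) ∧
  (∀ a b, ((pos a : ℕ × ℕ)).2 = ((pos b : ℕ × ℕ)).2 →
      ((pos a : ℕ × ℕ)).1 < ((pos b : ℕ × ℕ)).1 → a < b)

/-- The finite set of standard Young tableaux of skew shape `outer \ inner`. -/
def SYTs (outer inner : List ℕ) :
    Finset (Fin (skewCells outer inner).card → ↥(skewCells outer inner)) :=
  Finset.univ.filter (IsSYT outer inner)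

/-- The descent set of the tableau `pos`: the values `v` such that `v + 1` lies in a
strictly lower row than `v` (entry `v` is at index `v - 1`, entry `v+1` at index `v`). -/
def desSet (outer inner : List ℕ)
    (pos : Fin (skewCells outer inner).card → ↥(skewCells outer inner)) : Finset ℕ :=
  (Finset.range (skewCells outer inner).card).filter
    (fun v => ∃ a b : Fin (skewCells outer inner).card,
      (a : ℕ) + 1 = v ∧ (b : ℕ) = v ∧ ((pos a : ℕ × ℕ)).1 < ((pos b : ℕ × ℕ)).1)

/-- The major index of a tableau: the sum of its descents. -/
def majStat (outer inner : List ℕ)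
    (pos : Fin (skewCells outer inner).card → ↥(skewCells outer inner)) : ℕ :=
  (desSet outer inner pos).sum id

/-- The number of descents of a tableau. -/
def desStat (outer inner : List ℕ)
    (pos : Fin (skewCells outer inner).card → ↥(skewCells outer inner)) : ℕ :=
  (desSet outer inner pos).card

/-- `f_{outer∖inner, i}(q) = Σ_{τ ∈ SYT(outer∖inner), des(τ) = i} q^{maj(τ)} ∈ ℤ[q]`. -/
def fSkew (outer inner : List ℕ) (i : ℕ) : Polynomial ℤ :=
  ∑ pos ∈ (SYTs outer inner).filter (fun pos => desStat outer inner pos = i),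
    X ^ majStat outer inner pos

/-- `f_{λ, i}(q)` for a straight (non-skew) shape `λ`. -/
def fPoly (lam : List ℕ) (i : ℕ) : Polynomial ℤ := fSkew lam [] i

/-- Gaussian binomial coefficients for natural arguments, via the q-Pascal recurrence
`[M+1, N+1]_q = [M, N+1]_q + q^(M-N) [M, N]_q`, with `[M, 0]_q = 1`, `[0, N+1]_q = 0`. -/
def qBinomAux : ℕ → ℕ → Polynomial ℤ
  | _, 0 => 1
  | 0, _ + 1 => 0
  | M + 1, N + 1 => qBinomAux M (N + 1) + X ^ (M - N) * qBinomAux M N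

/-- Gaussian binomial coefficient `[M choose N]_q ∈ ℤ[q]`, with the convention that
it is `0` unless `0 ≤ N ≤ M`. -/
def qBinom (M N : ℤ) : Polynomial ℤ :=
  if 0 ≤ N ∧ N ≤ M then qBinomAux M.toNat N.toNat else 0

/-- `f*_{(n,k)∖(j),i}(q)`: the distribution of the major index over standard Young
tableaux of skew shape `(n,k)∖(j)` with exactly `i` descents in which the entry `1`
lies in the first (top) row. -/
def fStar (n k j i : ℕ) : Polynomial ℤ :=
  ∑ pos ∈ (SYTs [n, k] [j]).filter (fun pos => desStat [n, k] [j] pos = i ∧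
      ∀ a : Fin (skewCells [n, k] [j]).card, (a : ℕ) = 0 → ((pos a : ℕ × ℕ)).1 = 0),
    X ^ majStat [n, k] [j] pos


namespace Stmt9


lemma mem_skewCells {n k j : ℕ} {p : ℕ × ℕ} :
    p ∈ skewCells [n, k] [j] ↔ (p.1 = 0 ∧ j ≤ p.2 ∧ p.2 < n) ∨ (p.1 = 1 ∧ p.2 < k) := by
  obtain ⟨r, c⟩ := p
  simp only [skewCells, Finset.mem_filter, Finset.mem_product, Finset.mem_range,
    List.length, List.foldr]
  rcases r with _ | _ | r <;> simp [List.getD] <;> omega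

lemma skewCells_eq {n k j : ℕ} :
    skewCells [n, k] [j]
      = (Finset.Ico j n).image (fun c => ((0 : ℕ), c))
        ∪ (Finset.range k).image (fun c => ((1 : ℕ), c)) := by
  ext ⟨r, c⟩
  rw [mem_skewCells]
  simp [Finset.mem_image, Prod.ext_iff, eq_comm, and_comm]

lemma card_skewCells {n k j : ℕ} :
    (skewCells [n, k] [j]).card = n - j + k := by
  rw [skewCells_eq, Finset.card_union_of_disjoint, Finset.card_image_of_injective _
    (fun a b h => by simpa using h), Finset.card_image_of_injective _
    (fun a b h => by simpa using h), Nat.card_Ico, Finset.card_range]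
  · simp only [Finset.disjoint_left, Finset.mem_image]
    rintro ⟨r, c⟩ ⟨x, hx, h⟩ ⟨y, hy, h'⟩
    simp_all [Prod.ext_iff]
    omega

/-- The word model: `T` records the 0-indexed positions (= entry minus one) of the
entries lying in row 1. -/
def wordSet (n k j : ℕ) : Finset (Finset ℕ) :=
  ((Finset.range (n - j + k)).powerset).filter
    (fun T => T.card = k ∧ ∀ t ∈ T,
      (T.filter (· < t)).card < j ∨ 2 * (T.filter (· < t)).card < t + j)

def wDesSet (T : Finset ℕ) : Finset ℕ := T.filter (fun t => t ≠ 0 ∧ t - 1 ∉ T)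

def wMaj (T : Finset ℕ) : ℕ := (wDesSet T).sum id

def wDes (T : Finset ℕ) : ℕ := (wDesSet T).card

def fWord (n k j i : ℕ) : Polynomial ℤ :=
  ∑ T ∈ (wordSet n k j).filter (fun T => wDes T = i ∧ 0 ∉ T), X ^ wMaj T

/-- trailing run length of `T` inside `range c` -/
def runLen (c : ℕ) (T : Finset ℕ) : ℕ :=
  ((Finset.range c).filter (fun t => Finset.Ico t c ⊆ T)).card

lemma runF_spec (c : ℕ) (T : Finset ℕ) :
    (Finset.range c).filter (fun t => Finset.Ico t c ⊆ T)
      = Finset.Ico (c - runLen c T) c := by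
  set F := (Finset.range c).filter (fun t => Finset.Ico t c ⊆ T) with hF
  have hsub : F ⊆ Finset.range c := Finset.filter_subset _ _
  rcases F.eq_empty_or_nonempty with he | hne
  · rw [runLen, ← hF, he]; simp
  · obtain ⟨m, hm, hmin⟩ := F.exists_min_image id hne
    have h1 : F = Finset.Ico m c := by
      apply Finset.Subset.antisymm
      · intro t ht
        exact Finset.mem_Ico.mpr ⟨hmin t ht, Finset.mem_range.mp (hsub ht)⟩
      · intro t ht
        rw [Finset.mem_Ico] at ht
        rw [hF, Finset.mem_filter, Finset.mem_range]
        refine ⟨ht.2, ?_⟩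
        have := (Finset.mem_filter.mp (by rw [← hF]; exact hm)).2
        exact fun x hx => this (by rw [Finset.mem_Ico] at hx ⊢; omega)
    have hmc : m < c := Finset.mem_range.mp (hsub hm)
    have hcard : runLen c T = c - m := by rw [runLen, ← hF, h1, Nat.card_Ico]
    rw [h1, hcard]
    congr 1
    omega

lemma runLen_le (c : ℕ) (T : Finset ℕ) : runLen c T ≤ c := by
  have := Finset.card_filter_le (Finset.range c) (fun t => Finset.Ico t c ⊆ T)
  simpa [runLen, Finset.card_range] using this

lemma run_subset (c : ℕ) (T : Finset ℕ) : Finset.Ico (c - runLen c T) c ⊆ T := by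
  intro t ht
  have h := runF_spec c T
  have : t ∈ (Finset.range c).filter (fun t => Finset.Ico t c ⊆ T) := by rw [h]; exact ht
  have h2 := (Finset.mem_filter.mp this).2
  exact h2 (Finset.mem_Ico.mpr ⟨le_refl t, Finset.mem_range.mp (Finset.mem_filter.mp this).1⟩)

lemma run_notmem {c : ℕ} {T : Finset ℕ} (h : runLen c T < c) :
    c - runLen c T - 1 ∉ T := by
  intro hmem
  have hspec := runF_spec c T
  have : c - runLen c T - 1 ∈ (Finset.range c).filter (fun t => Finset.Ico t c ⊆ T) := by
    rw [Finset.mem_filter, Finset.mem_range]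
    refine ⟨by omega, fun x hx => ?_⟩
    rw [Finset.mem_Ico] at hx
    rcases Nat.eq_or_lt_of_le hx.1 with he | hlt
    · rwa [← he]
    · exact run_subset c T (Finset.mem_Ico.mpr ⟨by omega, hx.2⟩)
  rw [hspec, Finset.mem_Ico] at this
  omega

lemma runLen_eq {c ℓ : ℕ} {T : Finset ℕ} (hlc : ℓ < c)
    (h1 : Finset.Ico (c - ℓ) c ⊆ T) (h2 : c - ℓ - 1 ∉ T) : runLen c T = ℓ := by
  have hle : ℓ ≤ runLen c T := by
    have : Finset.Ico (c - ℓ) c ⊆ (Finset.range c).filter (fun t => Finset.Ico t c ⊆ T) := by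
      intro t ht
      rw [Finset.mem_Ico] at ht
      rw [Finset.mem_filter, Finset.mem_range]
      exact ⟨ht.2, fun x hx => h1 (by rw [Finset.mem_Ico] at hx ⊢; omega)⟩
    have := Finset.card_le_card this
    rw [Nat.card_Ico] at this
    rw [runLen]
    omega
  have hge : runLen c T ≤ ℓ := by
    by_contra hcon
    push_neg at hcon
    have hrc := runLen_le c T
    exact h2 (run_subset c T (Finset.mem_Ico.mpr ⟨by omega, by omega⟩))
  omega

lemma runLen_lt {n k j : ℕ} {T : Finset ℕ} (hk : 1 ≤ k) (hj : j < n)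
    (hT : T ∈ wordSet n k j) (hdes : wDes T ≠ 1) : runLen (n - j + k) T < k := by
  set c := n - j + k with hc
  simp only [wordSet, Finset.mem_filter, Finset.mem_powerset] at hT
  obtain ⟨hTc, hcard, _⟩ := hT
  have hFT : (Finset.range c).filter (fun t => Finset.Ico t c ⊆ T) ⊆ T := by
    intro t ht
    rw [Finset.mem_filter, Finset.mem_range] at ht
    exact ht.2 (Finset.mem_Ico.mpr ⟨le_refl t, ht.1⟩)
  have hle : runLen c T ≤ k := by
    rw [runLen, ← hcard]; exact Finset.card_le_card hFT
  rcases Nat.lt_or_ge (runLen c T) k with h | h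
  · exact h
  · exfalso
    have hrk : runLen c T = k := le_antisymm hle h
    have hFeq : (Finset.range c).filter (fun t => Finset.Ico t c ⊆ T) = T :=
      Finset.eq_of_subset_of_card_le hFT (by rw [runLen] at hrk; omega)
    have hTeq : T = Finset.Ico (c - k) c := by rw [← hFeq, runF_spec, hrk]
    have hdes1 : wDesSet T = {c - k} := by
      ext t
      simp only [wDesSet, Finset.mem_filter, hTeq, Finset.mem_Ico, Finset.mem_singleton]
      omega
    rw [wDes, hdes1] at hdes
    simp at hdes

variable {c ℓ : ℕ} {T' : Finset ℕ}

lemma wDesSet_union (hT' : ∀ t ∈ T', t < c - ℓ - 1) (h2 : 2 ≤ c - ℓ) (hl : 1 ≤ ℓ)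
    (hlc : ℓ < c) :
    wDesSet (T' ∪ Finset.Ico (c - ℓ) c) = insert (c - ℓ) (wDesSet T') := by
  ext t
  simp only [wDesSet, Finset.mem_filter, Finset.mem_union, Finset.mem_Ico, Finset.mem_insert,
    not_or, not_and, not_lt]
  constructor
  · rintro ⟨ht, hne, hd1, hd2⟩
    rcases ht with ht | ht
    · exact Or.inr ⟨ht, hne, hd1⟩
    · rcases Nat.eq_or_lt_of_le ht.1 with he | hlt
      · exact Or.inl he.symm
      · exfalso; have := hd2 (by omega); omega
  · rintro (rfl | ⟨ht, hne, hd⟩)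
    · refine ⟨Or.inr ⟨le_refl _, by omega⟩, by omega, fun hmem => ?_, fun h => by omega⟩
      have := hT' _ hmem; omega
    · have htb := hT' _ ht
      exact ⟨Or.inl ht, hne, hd, fun h => by omega⟩

lemma notmem_wDesSet (hT' : ∀ t ∈ T', t < c - ℓ - 1) : c - ℓ ∉ wDesSet T' := by
  intro h
  have := hT' _ (Finset.mem_filter.mp h).1
  omega

lemma wMaj_union (hT' : ∀ t ∈ T', t < c - ℓ - 1) (h2 : 2 ≤ c - ℓ) (hl : 1 ≤ ℓ)
    (hlc : ℓ < c) :
    wMaj (T' ∪ Finset.Ico (c - ℓ) c) = wMaj T' + (c - ℓ) := by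
  rw [wMaj, wDesSet_union hT' h2 hl hlc, Finset.sum_insert (notmem_wDesSet hT')]
  simp [wMaj, Nat.add_comm]

lemma wDes_union (hT' : ∀ t ∈ T', t < c - ℓ - 1) (h2 : 2 ≤ c - ℓ) (hl : 1 ≤ ℓ)
    (hlc : ℓ < c) :
    wDes (T' ∪ Finset.Ico (c - ℓ) c) = wDes T' + 1 := by
  rw [wDes, wDesSet_union hT' h2 hl hlc, Finset.card_insert_of_notMem (notmem_wDesSet hT')]
  rfl

lemma filter_lt_union (hT' : ∀ t ∈ T', t < c - ℓ - 1) {t : ℕ} (ht : t < c - ℓ - 1) :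
    (T' ∪ Finset.Ico (c - ℓ) c).filter (· < t) = T'.filter (· < t) := by
  ext s
  simp only [Finset.mem_filter, Finset.mem_union, Finset.mem_Ico]
  constructor
  · rintro ⟨hs | hs, hst⟩
    · exact ⟨hs, hst⟩
    · omega
  · rintro ⟨hs, hst⟩; exact ⟨Or.inl hs, hst⟩

lemma decomp_eq {T : Finset ℕ} (hTc : T ⊆ Finset.range c)
    (hsub : Finset.Ico (c - ℓ) c ⊆ T) (hnot : c - ℓ - 1 ∉ T) :
    T = T.filter (· < c - ℓ - 1) ∪ Finset.Ico (c - ℓ) c := by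
  ext t
  simp only [Finset.mem_union, Finset.mem_filter, Finset.mem_Ico]
  constructor
  · intro ht
    have htc := Finset.mem_range.mp (hTc ht)
    by_cases h : t < c - ℓ - 1
    · exact Or.inl ⟨ht, h⟩
    · right
      have : t ≠ c - ℓ - 1 := fun he => hnot (he ▸ ht)
      omega
  · rintro (⟨ht, _⟩ | ht)
    · exact ht
    · exact hsub (Finset.mem_Ico.mpr ht)

lemma mem_wordSet_iff {n k j : ℕ} {T : Finset ℕ} :
    T ∈ wordSet n k j ↔ T ⊆ Finset.range (n - j + k) ∧ T.card = k ∧ ∀ t ∈ T,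
      (T.filter (· < t)).card < j ∨ 2 * (T.filter (· < t)).card < t + j := by
  simp [wordSet, Finset.mem_filter, Finset.mem_powerset, and_assoc]

lemma union_mem_wordSet {n k j : ℕ} (hk : 1 ≤ k) (hkn : k ≤ n) (hj : j < n)
    (hl : 1 ≤ ℓ) (hlk : ℓ ≤ k - 1) (hT' : T' ∈ wordSet (n - 1) (k - ℓ) j) :
    T' ∪ Finset.Ico (n - j + k - ℓ) (n - j + k) ∈ wordSet n k j := by
  have hc' : n - 1 - j + (k - ℓ) = n - j + k - ℓ - 1 := by omega
  rw [mem_wordSet_iff] at hT' ⊢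
  obtain ⟨hT'c, hT'card, hT'cond⟩ := hT'
  set c := n - j + k with hc
  have hbound : ∀ t ∈ T', t < c - ℓ - 1 := by
    intro t ht
    have := Finset.mem_range.mp (hT'c ht)
    omega
  have hdisj : Disjoint T' (Finset.Ico (c - ℓ) c) := by
    rw [Finset.disjoint_left]
    intro t ht hmem
    rw [Finset.mem_Ico] at hmem
    have := hbound t ht
    omega
  refine ⟨?_, ?_, ?_⟩
  · intro t ht
    rw [Finset.mem_union] at ht
    rw [Finset.mem_range]
    rcases ht with ht | ht
    · have := hbound t ht; omega
    · exact (Finset.mem_Ico.mp ht).2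
  · rw [Finset.card_union_of_disjoint hdisj, hT'card, Nat.card_Ico]
    omega
  · intro t ht
    rw [Finset.mem_union] at ht
    rcases ht with ht | ht
    · rw [filter_lt_union hbound (hbound t ht)]
      exact hT'cond t ht
    · rw [Finset.mem_Ico] at ht
      right
      have hfe : (T' ∪ Finset.Ico (c - ℓ) c).filter (· < t)
          = T' ∪ Finset.Ico (c - ℓ) t := by
        ext s
        simp only [Finset.mem_filter, Finset.mem_union, Finset.mem_Ico]
        constructor
        · rintro ⟨hs | hs, hst⟩
          · exact Or.inl hs
          · exact Or.inr ⟨hs.1, hst⟩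
        · rintro (hs | hs)
          · exact ⟨Or.inl hs, by have := hbound s hs; omega⟩
          · exact ⟨Or.inr ⟨hs.1, by omega⟩, hs.2⟩
      have hdisj2 : Disjoint T' (Finset.Ico (c - ℓ) t) := by
        rw [Finset.disjoint_left]
        intro s hs hmem
        rw [Finset.mem_Ico] at hmem
        have := hbound s hs
        omega
      rw [hfe, Finset.card_union_of_disjoint hdisj2, hT'card, Nat.card_Ico]
      omega

lemma filter_mem_wordSet {n k j : ℕ} {T : Finset ℕ} (hk : 1 ≤ k) (hkn : k ≤ n) (hj : j < n)
    (hl : 1 ≤ ℓ) (hlk : ℓ ≤ k - 1) (hT : T ∈ wordSet n k j)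
    (hsub : Finset.Ico (n - j + k - ℓ) (n - j + k) ⊆ T)
    (hnot : n - j + k - ℓ - 1 ∉ T) :
    T.filter (· < n - j + k - ℓ - 1) ∈ wordSet (n - 1) (k - ℓ) j := by
  set c := n - j + k with hc
  rw [mem_wordSet_iff] at hT ⊢
  obtain ⟨hTc, hTcard, hTcond⟩ := hT
  have hdec := decomp_eq hTc hsub hnot
  set T' := T.filter (· < c - ℓ - 1) with hT'
  have hbound : ∀ t ∈ T', t < c - ℓ - 1 := fun t ht => (Finset.mem_filter.mp ht).2
  have hdisj : Disjoint T' (Finset.Ico (c - ℓ) c) := by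
    rw [Finset.disjoint_left]
    intro t ht hmem
    rw [Finset.mem_Ico] at hmem
    have := hbound t ht
    omega
  have hcard' : T'.card = k - ℓ := by
    have := hdec ▸ hTcard
    rw [Finset.card_union_of_disjoint hdisj, Nat.card_Ico] at this
    omega
  refine ⟨?_, hcard', ?_⟩
  · intro t ht
    rw [Finset.mem_range]
    have := hbound t ht
    omega
  · intro t ht
    have hfilter : T.filter (· < t) = T'.filter (· < t) := by
      conv_lhs => rw [hdec]
      exact filter_lt_union hbound (hbound t ht)
    have := hTcond t (Finset.filter_subset _ _ ht)
    rw [hfilter] at this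
    omega

lemma zero_fiber_eq {n k j i : ℕ} (hk : 1 ≤ k) (hj : j < n) :
    ((wordSet n k j).filter (fun T => wDes T = i ∧ 0 ∉ T)).filter
        (fun T => runLen (n - j + k) T = 0)
      = (wordSet (n - 1) k j).filter (fun T => wDes T = i ∧ 0 ∉ T) := by
  set c := n - j + k with hc
  have hc1 : 1 ≤ c := by omega
  have hc' : n - 1 - j + k = c - 1 := by omega
  ext T
  simp only [Finset.mem_filter, mem_wordSet_iff, hc', ← hc]
  constructor
  · rintro ⟨⟨⟨hTc, hcard, hcond⟩, hdes, h0⟩, hrun⟩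
    have hnot : c - 1 ∉ T := by
      have := run_notmem (T := T) (c := c) (by omega)
      rwa [hrun] at this
    refine ⟨⟨?_, hcard, hcond⟩, hdes, h0⟩
    intro t ht
    have := Finset.mem_range.mp (hTc ht)
    have : t ≠ c - 1 := fun he => hnot (he ▸ ht)
    rw [Finset.mem_range]
    omega
  · rintro ⟨⟨hTc, hcard, hcond⟩, hdes, h0⟩
    have hnot : c - 1 ∉ T := by
      intro hmem
      have := Finset.mem_range.mp (hTc hmem)
      omega
    refine ⟨⟨⟨fun t ht => by
      have := Finset.mem_range.mp (hTc ht)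
      rw [Finset.mem_range]; omega, hcard, hcond⟩, hdes, h0⟩, ?_⟩
    exact runLen_eq (by omega) (by rw [Nat.sub_zero]; simp) (by simpa using hnot)

lemma fiber_sum {n k j i ℓ : ℕ} (hk : 1 ≤ k) (hkn : k ≤ n) (hj : j < n) (hi : 1 ≤ i)
    (hl : 1 ≤ ℓ) (hlk : ℓ ≤ k - 1) :
    ∑ T ∈ ((wordSet n k j).filter (fun T => wDes T = i ∧ 0 ∉ T)).filter
        (fun T => runLen (n - j + k) T = ℓ), (X : Polynomial ℤ) ^ wMaj T
      = X ^ (n - j + k - ℓ) *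
        ∑ T ∈ (wordSet (n - 1) (k - ℓ) j).filter (fun T => wDes T = i - 1 ∧ 0 ∉ T),
          X ^ wMaj T := by
  set c := n - j + k with hc
  have h2 : 2 ≤ c - ℓ := by omega
  have hlc : ℓ < c := by omega
  rw [Finset.mul_sum]
  refine Finset.sum_bij' (fun T _ => T.filter (· < c - ℓ - 1))
    (fun T' _ => T' ∪ Finset.Ico (c - ℓ) c) ?_ ?_ ?_ ?_ ?_
  · intro T hT
    simp only [Finset.mem_filter] at hT ⊢
    obtain ⟨⟨hW, hdes, h0⟩, hrun⟩ := hT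
    have hTc : T ⊆ Finset.range c := (mem_wordSet_iff.mp hW).1
    have hsub : Finset.Ico (c - ℓ) c ⊆ T := by
      have := run_subset c T; rwa [hrun] at this
    have hnot : c - ℓ - 1 ∉ T := by
      have := run_notmem (T := T) (show runLen c T < c by omega); rwa [hrun] at this
    have hbound : ∀ t ∈ T.filter (· < c - ℓ - 1), t < c - ℓ - 1 :=
      fun t ht => (Finset.mem_filter.mp ht).2
    have hdec := decomp_eq hTc hsub hnot
    refine ⟨filter_mem_wordSet hk hkn hj hl hlk hW hsub hnot, ?_,
      fun h0' => h0 h0'.1⟩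
    have hdu : wDes T = wDes (T.filter (· < c - ℓ - 1)) + 1 := by
      conv_lhs => rw [hdec]
      exact wDes_union hbound h2 hl hlc
    omega
  · intro T' hT'
    simp only [Finset.mem_filter] at hT' ⊢
    obtain ⟨hW', hdes', h0'⟩ := hT'
    have hbound : ∀ t ∈ T', t < c - ℓ - 1 := by
      intro t ht
      have h1 := Finset.mem_range.mp ((mem_wordSet_iff.mp hW').1 ht)
      omega
    have hnot : c - ℓ - 1 ∉ T' ∪ Finset.Ico (c - ℓ) c := by
      rw [Finset.mem_union]
      rintro (h | h)
      · exact absurd (hbound _ h) (by omega)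
      · rw [Finset.mem_Ico] at h; omega
    refine ⟨⟨union_mem_wordSet hk hkn hj hl hlk hW', ?_, ?_⟩, ?_⟩
    · rw [wDes_union hbound h2 hl hlc, hdes']; omega
    · rw [Finset.mem_union, Finset.mem_Ico]
      rintro (h | h)
      · exact h0' h
      · omega
    · exact runLen_eq hlc Finset.subset_union_right hnot
  · intro T hT
    simp only [Finset.mem_filter] at hT
    obtain ⟨⟨hW, _, _⟩, hrun⟩ := hT
    have hTc := (mem_wordSet_iff.mp hW).1
    have hsub : Finset.Ico (c - ℓ) c ⊆ T := by
      have := run_subset c T; rwa [hrun] at this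
    have hnot : c - ℓ - 1 ∉ T := by
      have := run_notmem (T := T) (show runLen c T < c by omega); rwa [hrun] at this
    exact (decomp_eq hTc hsub hnot).symm
  · intro T' hT'
    simp only [Finset.mem_filter] at hT'
    have hbound : ∀ t ∈ T', t < c - ℓ - 1 := by
      intro t ht
      have h1 := Finset.mem_range.mp ((mem_wordSet_iff.mp hT'.1).1 ht)
      omega
    ext t
    simp only [Finset.mem_filter, Finset.mem_union, Finset.mem_Ico]
    constructor
    · rintro ⟨h | h, hlt⟩
      · exact h
      · omega
    · intro ht; exact ⟨Or.inl ht, hbound t ht⟩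
  · intro T hT
    simp only [Finset.mem_filter] at hT
    obtain ⟨⟨hW, _, _⟩, hrun⟩ := hT
    have hTc := (mem_wordSet_iff.mp hW).1
    have hsub : Finset.Ico (c - ℓ) c ⊆ T := by
      have := run_subset c T; rwa [hrun] at this
    have hnot : c - ℓ - 1 ∉ T := by
      have := run_notmem (T := T) (show runLen c T < c by omega); rwa [hrun] at this
    have hbound : ∀ t ∈ T.filter (· < c - ℓ - 1), t < c - ℓ - 1 :=
      fun t ht => (Finset.mem_filter.mp ht).2
    have hmaj : wMaj T = wMaj (T.filter (· < c - ℓ - 1)) + (c - ℓ) := by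
      conv_lhs => rw [decomp_eq hTc hsub hnot]
      exact wMaj_union hbound h2 hl hlc
    rw [hmaj, pow_add, mul_comm]

lemma fWord_rec {n k j i : ℕ} (hk : 1 ≤ k) (hkn : k < n) (hj : j < n) (hi : 2 ≤ i) :
    fWord n k j i = fWord (n - 1) k j i
      + ∑ l ∈ Finset.Icc 1 (k - 1), X ^ (n - j + k - l) * fWord (n - 1) (k - l) j (i - 1) := by
  set c := n - j + k with hc
  rw [fWord, ← Finset.sum_fiberwise_of_maps_to (g := fun T => runLen c T)
    (t := Finset.range k) ?_ (fun T => (X : Polynomial ℤ) ^ wMaj T)]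
  · rw [show Finset.range k = insert 0 (Finset.Icc 1 (k - 1)) by
      ext x; simp only [Finset.mem_range, Finset.mem_insert, Finset.mem_Icc]; omega]
    rw [Finset.sum_insert (by simp)]
    congr 1
    · rw [zero_fiber_eq hk hj, fWord]
    · apply Finset.sum_congr rfl
      intro l hl
      rw [Finset.mem_Icc] at hl
      rw [fiber_sum hk (le_of_lt hkn) hj (by omega) hl.1 hl.2, fWord]
  · intro T hT
    rw [Finset.mem_filter] at hT
    rw [Finset.mem_range]
    exact runLen_lt hk hj hT.1 (by rw [hT.2.1]; omega)


/-! ### The tableau ↔ word correspondence -/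

def fromT (j : ℕ) (T : Finset ℕ) (t : ℕ) : ℕ × ℕ :=
  if t ∈ T then (1, (T.filter (· < t)).card)
  else (0, j + (t - (T.filter (· < t)).card))

def posOf (n k j : ℕ) (hk : 1 ≤ k) (T : Finset ℕ)
    (a : Fin (skewCells [n, k] [j]).card) : ↥(skewCells [n, k] [j]) :=
  if h : fromT j T (a : ℕ) ∈ skewCells [n, k] [j] then ⟨_, h⟩
  else ⟨(1, 0), by rw [mem_skewCells]; exact Or.inr ⟨rfl, hk⟩⟩

def toT {n k j : ℕ} (pos : Fin (skewCells [n, k] [j]).card → ↥(skewCells [n, k] [j])) :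
    Finset ℕ :=
  (Finset.univ.filter (fun a => ((pos a : ℕ × ℕ)).1 = 1)).image Fin.val

lemma rank_lt_card {T : Finset ℕ} {t : ℕ} (ht : t ∈ T) :
    (T.filter (· < t)).card < T.card := by
  apply Finset.card_lt_card
  constructor
  · exact Finset.filter_subset _ _
  · intro hsub
    have := Finset.mem_filter.mp (hsub ht)
    omega

lemma rank_le {T : Finset ℕ} (t : ℕ) : (T.filter (· < t)).card ≤ t := by
  have h : T.filter (· < t) ⊆ Finset.range t := by
    intro s hs
    rw [Finset.mem_range]
    exact (Finset.mem_filter.mp hs).2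
  simpa using Finset.card_le_card h

lemma sdiff_range_card (T : Finset ℕ) (t : ℕ) :
    (Finset.range t \ T).card = t - (T.filter (· < t)).card := by
  have h1 : Finset.range t ∩ T = T.filter (· < t) := by
    ext s
    simp only [Finset.mem_inter, Finset.mem_range, Finset.mem_filter]
    tauto
  have h2 := Finset.card_inter_add_card_sdiff (Finset.range t) T
  rw [h1, Finset.card_range] at h2
  omega

lemma rank_strictmono_mem {T : Finset ℕ} {a b : ℕ} (ha : a ∈ T) (hab : a < b) :
    (T.filter (· < a)).card < (T.filter (· < b)).card := by
  apply Finset.card_lt_card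
  constructor
  · intro s hs
    rw [Finset.mem_filter] at hs ⊢
    exact ⟨hs.1, by omega⟩
  · intro hsub
    have := Finset.mem_filter.mp (hsub (Finset.mem_filter.mpr ⟨ha, hab⟩))
    omega

lemma rank_mono {T : Finset ℕ} {a b : ℕ} (hab : a ≤ b) :
    (T.filter (· < a)).card ≤ (T.filter (· < b)).card := by
  apply Finset.card_le_card
  intro s hs
  rw [Finset.mem_filter] at hs ⊢
  exact ⟨hs.1, by omega⟩

lemma corank_strictmono {T : Finset ℕ} {a b : ℕ} (ha : a ∉ T) (hab : a < b) :
    a - (T.filter (· < a)).card < b - (T.filter (· < b)).card := by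
  rw [← sdiff_range_card, ← sdiff_range_card]
  apply Finset.card_lt_card
  constructor
  · intro s hs
    rw [Finset.mem_sdiff, Finset.mem_range] at hs ⊢
    exact ⟨by omega, hs.2⟩
  · intro hsub
    have := Finset.mem_sdiff.mp (hsub (Finset.mem_sdiff.mpr ⟨Finset.mem_range.mpr hab, ha⟩))
    rw [Finset.mem_range] at this
    omega

lemma fromT_mem {n k j : ℕ} (hkn : k ≤ n) {T : Finset ℕ} (hT : T ∈ wordSet n k j)
    {t : ℕ} (ht : t < n - j + k) : fromT j T t ∈ skewCells [n, k] [j] := by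
  rw [mem_wordSet_iff] at hT
  obtain ⟨hTc, hcard, _⟩ := hT
  rw [mem_skewCells]
  unfold fromT
  split_ifs with h
  · exact Or.inr ⟨rfl, by have := rank_lt_card h; omega⟩
  · left
    refine ⟨rfl, by omega, ?_⟩
    have h1 : (Finset.range t \ T).card < (Finset.range (n - j + k) \ T).card := by
      apply Finset.card_lt_card
      constructor
      · intro s hs
        rw [Finset.mem_sdiff, Finset.mem_range] at hs ⊢
        exact ⟨by omega, hs.2⟩
      · intro hsub
        have := Finset.mem_sdiff.mp (hsub (Finset.mem_sdiff.mpr ⟨Finset.mem_range.mpr ht, h⟩))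
        rw [Finset.mem_range] at this
        omega
    have h2 : (Finset.range (n - j + k) \ T).card = n - j + k - k := by
      rw [Finset.card_sdiff_of_subset hTc, Finset.card_range, hcard]
    rw [sdiff_range_card] at h1
    have h3 := rank_le (T := T) t
    omega

lemma posOf_coe {n k j : ℕ} (hk : 1 ≤ k) (hkn : k ≤ n) {T : Finset ℕ}
    (hT : T ∈ wordSet n k j) (a : Fin (skewCells [n, k] [j]).card) :
    ((posOf n k j hk T a : ℕ × ℕ)) = fromT j T (a : ℕ) := by
  have ha : (a : ℕ) < n - j + k := by
    have h1 := a.isLt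
    have h2 := card_skewCells (n := n) (k := k) (j := j)
    omega
  rw [posOf, dif_pos (fromT_mem hkn hT ha)]

lemma corank_mono {T : Finset ℕ} {a b : ℕ} (hab : a ≤ b) :
    a - (T.filter (· < a)).card ≤ b - (T.filter (· < b)).card := by
  rw [← sdiff_range_card, ← sdiff_range_card]
  apply Finset.card_le_card
  intro s hs
  rw [Finset.mem_sdiff, Finset.mem_range] at hs ⊢
  exact ⟨by omega, hs.2⟩

lemma isSYT_posOf {n k j : ℕ} (hk : 1 ≤ k) (hkn : k ≤ n) {T : Finset ℕ}
    (hT : T ∈ wordSet n k j) : IsSYT [n, k] [j] (posOf n k j hk T) := by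
  have hcond := (mem_wordSet_iff.mp hT).2.2
  have hco := posOf_coe hk hkn hT
  refine ⟨?_, ?_, ?_⟩
  · intro a b hab
    have h : fromT j T (a : ℕ) = fromT j T (b : ℕ) := by
      rw [← hco a, ← hco b, hab]
    unfold fromT at h
    by_cases haT : (a : ℕ) ∈ T <;> by_cases hbT : (b : ℕ) ∈ T <;>
        simp only [haT, hbT, if_true, if_false, Prod.mk.injEq] at h
    · apply Fin.ext
      by_contra hne
      rcases Nat.lt_or_ge (a : ℕ) (b : ℕ) with hlt | hge
      · have := rank_strictmono_mem haT hlt; omega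
      · have := rank_strictmono_mem hbT (show (b:ℕ) < (a:ℕ) by omega); omega
    · exact absurd h.1 one_ne_zero
    · exact absurd h.1 zero_ne_one
    · apply Fin.ext
      by_contra hne
      rcases Nat.lt_or_ge (a : ℕ) (b : ℕ) with hlt | hge
      · have := corank_strictmono haT hlt; omega
      · have := corank_strictmono hbT (show (b:ℕ) < (a:ℕ) by omega); omega
  · intro a b hrow hcol
    rw [hco a, hco b] at hrow hcol
    unfold fromT at hrow hcol
    by_cases haT : (a : ℕ) ∈ T <;> by_cases hbT : (b : ℕ) ∈ T <;>
        simp only [haT, hbT, if_true, if_false] at hrow hcol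
    · rw [Fin.lt_def]
      by_contra hge
      push_neg at hge
      have := rank_mono (T := T) hge
      omega
    · exact absurd hrow one_ne_zero
    · exact absurd hrow zero_ne_one
    · rw [Fin.lt_def]
      by_contra hge
      push_neg at hge
      have := corank_mono (T := T) hge
      omega
  · intro a b hcol hrow
    rw [hco a, hco b] at hrow hcol
    unfold fromT at hrow hcol
    by_cases haT : (a : ℕ) ∈ T <;> by_cases hbT : (b : ℕ) ∈ T <;>
        simp only [haT, hbT, if_true, if_false] at hrow hcol
    · omega
    · omega
    · -- a ∉ T, b ∈ T : hcol : j + (a - rank a) = rank b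
      rw [Fin.lt_def]
      by_contra hge
      push_neg at hge
      have hba : (b : ℕ) < (a : ℕ) := by
        rcases Nat.eq_or_lt_of_le hge with he | h
        · exact absurd (show (a:ℕ) ∈ T by rw [← he]; exact hbT) haT
        · exact h
      have hc := hcond _ hbT
      have h1 := corank_mono (T := T) (le_of_lt hba)
      have h2 := rank_le (T := T) (b : ℕ)
      have h3 := rank_le (T := T) (a : ℕ)
      omega
    · omega

section SYTside

variable {n k j : ℕ} {pos : Fin (skewCells [n, k] [j]).card → ↥(skewCells [n, k] [j])}

lemma cell_cases (a : Fin (skewCells [n, k] [j]).card) :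
    (((pos a : ℕ × ℕ)).1 = 0 ∧ j ≤ ((pos a : ℕ × ℕ)).2 ∧ ((pos a : ℕ × ℕ)).2 < n) ∨
      (((pos a : ℕ × ℕ)).1 = 1 ∧ ((pos a : ℕ × ℕ)).2 < k) :=
  (mem_skewCells).mp (pos a).2

lemma pos_surj (hpos : IsSYT [n, k] [j] pos) :
    ∀ p ∈ skewCells [n, k] [j], ∃ a, (pos a : ℕ × ℕ) = p := by
  have hbij : Function.Bijective pos :=
    (Fintype.bijective_iff_injective_and_card pos).mpr
      ⟨hpos.1, by simp [Fintype.card_coe]⟩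
  intro p hp
  obtain ⟨a, ha⟩ := hbij.2 ⟨p, hp⟩
  exact ⟨a, by rw [ha]⟩

lemma col_lt_of_lt (hpos : IsSYT [n, k] [j] pos) {a b : Fin (skewCells [n, k] [j]).card}
    (hab : a < b) (hrow : ((pos a : ℕ × ℕ)).1 = ((pos b : ℕ × ℕ)).1) :
    ((pos a : ℕ × ℕ)).2 < ((pos b : ℕ × ℕ)).2 := by
  rcases lt_trichotomy ((pos a : ℕ × ℕ)).2 ((pos b : ℕ × ℕ)).2 with h | h | h
  · exact h
  · exfalso
    have : pos a = pos b := Subtype.ext (Prod.ext hrow h)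
    exact absurd (hpos.1 this) (ne_of_lt hab)
  · exact absurd hab (not_lt_of_gt (hpos.2.1 b a hrow.symm h))

lemma col_eq_rank1 (hpos : IsSYT [n, k] [j] pos) (a : Fin (skewCells [n, k] [j]).card)
    (hrowa : ((pos a : ℕ × ℕ)).1 = 1) :
    ((pos a : ℕ × ℕ)).2
      = (Finset.univ.filter
          (fun b => ((pos b : ℕ × ℕ)).1 = 1 ∧ b < a)).card := by
  have hcolk : ((pos a : ℕ × ℕ)).2 < k := by
    rcases cell_cases (pos := pos) a with h | h
    · rw [hrowa] at h; omega
    · exact h.2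
  have key : (Finset.univ.filter
      (fun b => ((pos b : ℕ × ℕ)).1 = 1 ∧ b < a)).card
      = (Finset.range ((pos a : ℕ × ℕ)).2).card := by
    apply Finset.card_bij (fun b _ => ((pos b : ℕ × ℕ)).2)
    · intro b hb
      rw [Finset.mem_filter] at hb
      rw [Finset.mem_range]
      exact col_lt_of_lt hpos hb.2.2 (hb.2.1.trans hrowa.symm)
    · intro b1 h1 b2 h2 heq
      rw [Finset.mem_filter] at h1 h2
      exact hpos.1 (Subtype.ext (Prod.ext (h1.2.1.trans h2.2.1.symm) heq))
    · intro m hm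
      rw [Finset.mem_range] at hm
      obtain ⟨b, hb⟩ := pos_surj hpos ((1 : ℕ), m)
        ((mem_skewCells).mpr (Or.inr ⟨rfl, by omega⟩))
      have hrowb : ((pos b : ℕ × ℕ)).1 = 1 := by rw [hb]
      have hcolb : ((pos b : ℕ × ℕ)).2 = m := by rw [hb]
      refine ⟨b, Finset.mem_filter.mpr ⟨Finset.mem_univ _, hrowb, ?_⟩, hcolb⟩
      apply hpos.2.1
      · exact hrowb.trans hrowa.symm
      · rw [hcolb]; exact hm
  rw [key, Finset.card_range]

lemma col_eq_rank0 (hpos : IsSYT [n, k] [j] pos) (a : Fin (skewCells [n, k] [j]).card)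
    (hrowa : ((pos a : ℕ × ℕ)).1 = 0) :
    ((pos a : ℕ × ℕ)).2
      = j + (Finset.univ.filter
          (fun b => ((pos b : ℕ × ℕ)).1 = 0 ∧ b < a)).card := by
  have hcol : j ≤ ((pos a : ℕ × ℕ)).2 ∧ ((pos a : ℕ × ℕ)).2 < n := by
    rcases cell_cases (pos := pos) a with h | h
    · exact h.2
    · rw [hrowa] at h; omega
  have key : (Finset.univ.filter
      (fun b => ((pos b : ℕ × ℕ)).1 = 0 ∧ b < a)).card
      = (Finset.Ico j ((pos a : ℕ × ℕ)).2).card := by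
    apply Finset.card_bij (fun b _ => ((pos b : ℕ × ℕ)).2)
    · intro b hb
      rw [Finset.mem_filter] at hb
      rw [Finset.mem_Ico]
      have hjb : j ≤ ((pos b : ℕ × ℕ)).2 := by
        rcases cell_cases (pos := pos) b with h | h
        · exact h.2.1
        · rw [hb.2.1] at h; omega
      exact ⟨hjb, col_lt_of_lt hpos hb.2.2 (hb.2.1.trans hrowa.symm)⟩
    · intro b1 h1 b2 h2 heq
      rw [Finset.mem_filter] at h1 h2
      exact hpos.1 (Subtype.ext (Prod.ext (h1.2.1.trans h2.2.1.symm) heq))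
    · intro m hm
      rw [Finset.mem_Ico] at hm
      obtain ⟨b, hb⟩ := pos_surj hpos ((0 : ℕ), m)
        ((mem_skewCells).mpr (Or.inl ⟨rfl, hm.1, by omega⟩))
      have hrowb : ((pos b : ℕ × ℕ)).1 = 0 := by rw [hb]
      have hcolb : ((pos b : ℕ × ℕ)).2 = m := by rw [hb]
      refine ⟨b, Finset.mem_filter.mpr ⟨Finset.mem_univ _, hrowb, ?_⟩, hcolb⟩
      apply hpos.2.1
      · exact hrowb.trans hrowa.symm
      · rw [hcolb]; exact hm.2
  rw [key, Nat.card_Ico]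
  omega

lemma val_eq_split (a : Fin (skewCells [n, k] [j]).card) :
    (a : ℕ) = (Finset.univ.filter (fun b => ((pos b : ℕ × ℕ)).1 = 0 ∧ b < a)).card
      + (Finset.univ.filter (fun b => ((pos b : ℕ × ℕ)).1 = 1 ∧ b < a)).card := by
  have hsplit : Finset.Iio a
      = Finset.univ.filter (fun b => ((pos b : ℕ × ℕ)).1 = 0 ∧ b < a)
        ∪ Finset.univ.filter (fun b => ((pos b : ℕ × ℕ)).1 = 1 ∧ b < a) := by
    ext b
    simp only [Finset.mem_Iio, Finset.mem_union, Finset.mem_filter, Finset.mem_univ, true_and]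
    have := cell_cases (pos := pos) b
    tauto
  have hdisj : Disjoint (Finset.univ.filter (fun b => ((pos b : ℕ × ℕ)).1 = 0 ∧ b < a))
      (Finset.univ.filter (fun b => ((pos b : ℕ × ℕ)).1 = 1 ∧ b < a)) := by
    rw [Finset.disjoint_left]
    intro b hb hb'
    rw [Finset.mem_filter] at hb hb'
    omega
  have := Fin.card_Iio a
  rw [hsplit, Finset.card_union_of_disjoint hdisj] at this
  omega

lemma mem_toT {a : Fin (skewCells [n, k] [j]).card} :
    (a : ℕ) ∈ toT pos ↔ ((pos a : ℕ × ℕ)).1 = 1 := by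
  simp only [toT, Finset.mem_image, Finset.mem_filter, Finset.mem_univ, true_and]
  constructor
  · rintro ⟨b, hb, hba⟩
    rwa [show a = b from Fin.ext hba.symm]
  · intro h; exact ⟨a, h, rfl⟩

lemma toT_subset {t : ℕ} (ht : t ∈ toT pos) : t < (skewCells [n, k] [j]).card := by
  simp only [toT, Finset.mem_image, Finset.mem_filter, Finset.mem_univ, true_and] at ht
  obtain ⟨b, _, hb⟩ := ht
  rw [← hb]
  exact b.isLt

lemma toT_filter_card (a : Fin (skewCells [n, k] [j]).card) :
    ((toT pos).filter (· < (a : ℕ))).card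
      = (Finset.univ.filter (fun b => ((pos b : ℕ × ℕ)).1 = 1 ∧ b < a)).card := by
  have himg : (toT pos).filter (· < (a : ℕ))
      = (Finset.univ.filter (fun b => ((pos b : ℕ × ℕ)).1 = 1 ∧ b < a)).image Fin.val := by
    ext t
    simp only [toT, Finset.mem_filter, Finset.mem_image, Finset.mem_univ, true_and]
    constructor
    · rintro ⟨⟨b, hb1, rfl⟩, hlt⟩
      exact ⟨b, ⟨hb1, by rwa [Fin.lt_def]⟩, rfl⟩
    · rintro ⟨b, ⟨hb1, hba⟩, rfl⟩
      exact ⟨⟨b, hb1, rfl⟩, by rwa [← Fin.lt_def]⟩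
  rw [himg, Finset.card_image_of_injective _ Fin.val_injective]

lemma toT_card (hpos : IsSYT [n, k] [j] pos) : (toT pos).card = k := by
  rw [toT, Finset.card_image_of_injective _ Fin.val_injective]
  have key : (Finset.univ.filter (fun a => ((pos a : ℕ × ℕ)).1 = 1)).card
      = (Finset.range k).card := by
    apply Finset.card_bij (fun b _ => ((pos b : ℕ × ℕ)).2)
    · intro b hb
      rw [Finset.mem_filter] at hb
      rw [Finset.mem_range]
      rcases cell_cases (pos := pos) b with h | h
      · rw [hb.2] at h; omega
      · exact h.2
    · intro b1 h1 b2 h2 heq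
      rw [Finset.mem_filter] at h1 h2
      exact hpos.1 (Subtype.ext (Prod.ext (h1.2.trans h2.2.symm) heq))
    · intro m hm
      rw [Finset.mem_range] at hm
      obtain ⟨b, hb⟩ := pos_surj hpos ((1 : ℕ), m)
        ((mem_skewCells).mpr (Or.inr ⟨rfl, hm⟩))
      exact ⟨b, Finset.mem_filter.mpr ⟨Finset.mem_univ _, by rw [hb]⟩, by rw [hb]⟩
  rw [key, Finset.card_range]

lemma toT_mem_wordSet (hkn : k ≤ n) (hpos : IsSYT [n, k] [j] pos) :
    toT pos ∈ wordSet n k j := by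
  rw [mem_wordSet_iff]
  have hc := card_skewCells (n := n) (k := k) (j := j)
  refine ⟨fun t ht => Finset.mem_range.mpr (by have := toT_subset ht; omega),
    toT_card hpos, ?_⟩
  intro t ht
  have htc : t < (skewCells [n, k] [j]).card := toT_subset ht
  set b : Fin (skewCells [n, k] [j]).card := ⟨t, htc⟩ with hbdef
  have hrowb : ((pos b : ℕ × ℕ)).1 = 1 := mem_toT.mp ht
  have hr : ((toT pos).filter (· < t)).card = ((pos b : ℕ × ℕ)).2 := by
    rw [show ((toT pos).filter (· < t)) = ((toT pos).filter (· < (b : ℕ))) from rfl,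
      toT_filter_card, ← col_eq_rank1 hpos b hrowb]
  by_cases hrj : ((toT pos).filter (· < t)).card < j
  · exact Or.inl hrj
  · right
    have hcolk : ((pos b : ℕ × ℕ)).2 < k := by
      rcases cell_cases (pos := pos) b with h | h
      · rw [hrowb] at h; omega
      · exact h.2
    obtain ⟨a, ha⟩ := pos_surj hpos ((0 : ℕ), ((pos b : ℕ × ℕ)).2)
      ((mem_skewCells).mpr (Or.inl ⟨rfl, by omega, by omega⟩))
    have hrowa : ((pos a : ℕ × ℕ)).1 = 0 := by rw [ha]
    have hcola : ((pos a : ℕ × ℕ)).2 = ((pos b : ℕ × ℕ)).2 := by rw [ha]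
    have hab : a < b := hpos.2.2 a b hcola (by omega)
    have h0a := col_eq_rank0 hpos a hrowa
    have h0mono : (Finset.univ.filter (fun x => ((pos x : ℕ × ℕ)).1 = 0 ∧ x < a)).card
        < (Finset.univ.filter (fun x => ((pos x : ℕ × ℕ)).1 = 0 ∧ x < b)).card := by
      apply Finset.card_lt_card
      constructor
      · intro x hx
        rw [Finset.mem_filter] at hx ⊢
        exact ⟨hx.1, hx.2.1, lt_trans hx.2.2 hab⟩
      · intro hsub
        have := Finset.mem_filter.mp
          (hsub (Finset.mem_filter.mpr ⟨Finset.mem_univ _, hrowa, hab⟩))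
        exact absurd this.2.2 (lt_irrefl a)
    have hsplit := val_eq_split (pos := pos) b
    have h1b := col_eq_rank1 hpos b hrowb
    have hbv : (b : ℕ) = t := rfl
    omega

lemma desSet_eq (hpos : IsSYT [n, k] [j] pos) :
    desSet [n, k] [j] pos = wDesSet (toT pos) := by
  ext v
  simp only [desSet, wDesSet, Finset.mem_filter, Finset.mem_range]
  constructor
  · rintro ⟨hv, a, b, ha, hb, hrowlt⟩
    have hrows : ((pos b : ℕ × ℕ)).1 = 1 ∧ ((pos a : ℕ × ℕ)).1 = 0 := by
      rcases cell_cases (pos := pos) a with h | h <;>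
        rcases cell_cases (pos := pos) b with h' | h' <;> omega
    refine ⟨by rw [← hb]; exact mem_toT.mpr hrows.1, by omega, ?_⟩
    have hva : v - 1 = (a : ℕ) := by omega
    rw [hva, mem_toT]
    omega
  · rintro ⟨hvT, hv0, hv1⟩
    have hvc : v < (skewCells [n, k] [j]).card := toT_subset hvT
    have hvc' : v - 1 < (skewCells [n, k] [j]).card := by omega
    refine ⟨hvc, ⟨v - 1, hvc'⟩, ⟨v, hvc⟩, by simp; omega, rfl, ?_⟩
    have hrowb : ((pos ⟨v, hvc⟩ : ℕ × ℕ)).1 = 1 := mem_toT.mp hvT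
    have hrowa : ((pos ⟨v - 1, hvc'⟩ : ℕ × ℕ)).1 = 0 := by
      have h1 : ¬ ((pos ⟨v - 1, hvc'⟩ : ℕ × ℕ)).1 = 1 := fun h => hv1 (mem_toT.mpr h)
      rcases cell_cases (pos := pos) ⟨v - 1, hvc'⟩ with h | h
      · exact h.1
      · exact absurd h.1 h1
    omega

lemma majStat_eq (hpos : IsSYT [n, k] [j] pos) :
    majStat [n, k] [j] pos = wMaj (toT pos) := by
  rw [majStat, wMaj, desSet_eq hpos]

lemma desStat_eq (hpos : IsSYT [n, k] [j] pos) :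
    desStat [n, k] [j] pos = wDes (toT pos) := by
  rw [desStat, wDes, desSet_eq hpos]

lemma firstrow_iff :
    (∀ a : Fin (skewCells [n, k] [j]).card, (a : ℕ) = 0 → ((pos a : ℕ × ℕ)).1 = 0)
      ↔ 0 ∉ toT pos := by
  constructor
  · intro h hmem
    have hc : (0 : ℕ) < (skewCells [n, k] [j]).card := toT_subset hmem
    have := mem_toT (pos := pos) (a := ⟨0, hc⟩) |>.mp hmem
    have h0 := h ⟨0, hc⟩ rfl
    omega
  · intro h a ha
    rcases cell_cases (pos := pos) a with h' | h'
    · exact h'.1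
    · exact absurd (mem_toT.mpr h'.1) (ha ▸ h)

end SYTside

lemma toT_posOf {n k j : ℕ} (hk : 1 ≤ k) (hkn : k ≤ n) {T : Finset ℕ}
    (hT : T ∈ wordSet n k j) : toT (posOf n k j hk T) = T := by
  have hc := card_skewCells (n := n) (k := k) (j := j)
  ext t
  by_cases htc : t < (skewCells [n, k] [j]).card
  · rw [show t = ((⟨t, htc⟩ : Fin (skewCells [n, k] [j]).card) : ℕ) from rfl, mem_toT,
      posOf_coe hk hkn hT]
    unfold fromT
    split_ifs with hmem
    · simpa using hmem
    · simpa using hmem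
  · constructor
    · intro ht; exact absurd (toT_subset ht) htc
    · intro ht
      have := Finset.mem_range.mp ((mem_wordSet_iff.mp hT).1 ht)
      omega

lemma posOf_toT {n k j : ℕ} (hk : 1 ≤ k) (hkn : k ≤ n)
    {pos : Fin (skewCells [n, k] [j]).card → ↥(skewCells [n, k] [j])}
    (hpos : IsSYT [n, k] [j] pos) : posOf n k j hk (toT pos) = pos := by
  have hW := toT_mem_wordSet hkn hpos
  funext a
  apply Subtype.ext
  rw [posOf_coe hk hkn hW]
  unfold fromT
  by_cases hrow : ((pos a : ℕ × ℕ)).1 = 1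
  · rw [if_pos (mem_toT.mpr hrow)]
    have h1 := col_eq_rank1 hpos a hrow
    rw [toT_filter_card]
    exact Prod.ext hrow.symm h1.symm
  · have hrow0 : ((pos a : ℕ × ℕ)).1 = 0 := by
      rcases cell_cases (pos := pos) a with h | h
      · exact h.1
      · exact absurd h.1 hrow
    rw [if_neg (fun hm => hrow (mem_toT.mp hm))]
    have hsplit := val_eq_split (pos := pos) a
    have h0 := col_eq_rank0 hpos a hrow0
    have h1 := toT_filter_card (pos := pos) a
    exact Prod.ext hrow0.symm (by omega)

theorem fStar_eq_fWord {n k j i : ℕ} (hk : 1 ≤ k) (hkn : k ≤ n) :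
    fStar n k j i = fWord n k j i := by
  rw [fStar, fWord]
  refine Finset.sum_bij' (fun pos _ => toT pos) (fun T _ => posOf n k j hk T)
    ?_ ?_ ?_ ?_ ?_
  · intro pos hpos
    simp only [Finset.mem_filter, SYTs, Finset.mem_univ, true_and] at hpos
    obtain ⟨hS, hdes, h1⟩ := hpos
    refine Finset.mem_filter.mpr ⟨toT_mem_wordSet hkn hS, ?_, firstrow_iff.mp h1⟩
    rw [← desStat_eq hS]; exact hdes
  · intro T hT
    rw [Finset.mem_filter] at hT
    obtain ⟨hW, hdes, h0⟩ := hT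
    have hS := isSYT_posOf hk hkn hW
    rw [Finset.mem_filter]
    refine ⟨?_, ?_, ?_⟩
    · simp only [SYTs, Finset.mem_filter, Finset.mem_univ, true_and]
      exact hS
    · rw [desStat_eq hS, toT_posOf hk hkn hW]; exact hdes
    · rw [firstrow_iff, toT_posOf hk hkn hW]; exact h0
  · intro pos hpos
    simp only [Finset.mem_filter, SYTs, Finset.mem_univ, true_and] at hpos
    exact posOf_toT hk hkn hpos.1
  · intro T hT
    rw [Finset.mem_filter] at hT
    exact toT_posOf hk hkn hT.1
  · intro pos hpos
    simp only [Finset.mem_filter, SYTs, Finset.mem_univ, true_and] at hpos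
    rw [majStat_eq hpos.1]

end Stmt9

theorem stmt9 (n k j i : ℕ) (hk : 0 < k) (hkn : k < n) (hj : j < n) (hi : 1 < i) :
    fStar n k j i =
      fStar (n - 1) k j i +
        ∑ l ∈ Finset.Icc 1 (k - 1), X ^ (n - j + k - l) * fStar (n - 1) (k - l) j (i - 1) := by
  rw [Stmt9.fStar_eq_fWord hk (le_of_lt hkn),
    Stmt9.fStar_eq_fWord hk (by omega : k ≤ n - 1),
    Stmt9.fWord_rec hk hkn hj hi]
  rw [add_right_inj]
  apply Finset.sum_congr rfl
  intro l hl
  rw [Finset.mem_Icc] at hl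
  rw [Stmt9.fStar_eq_fWord (by omega) (by omega)]
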